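/- If a sequence of functions $F_n \in L_2(X,\mu)\hat\otimes L_2(Y,\nu)$ converges to $0$ in the projective tensor norm, then there exists a subsequence $F_{n_j}$ and null sets $M \subseteq X$, $N \subseteq Y$ (i.e., $\mu(M)=0$, $\nu(N)=0$) such that $F_{n_j}(x,y) \to 0$ for every $(x,y) \in (X\setminus M) \times (Y\setminus N)$. -/

import Mathlib

open MeasureTheory Filter Topology ENNReal

lemma my_sq_rpow_half (x : ℝ≥0∞) : (x ^ (1/2:ℝ)) ^ (2:ℕ) = x := by
  rw [← ENNReal.rpow_natCast (x ^ (1/2:ℝ)) 2, ← ENNReal.rpow_mul]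
  norm_num

lemma my_amgm (p q : ℝ≥0∞) : p * q ≤ p^2 + q^2 := by
  rcases le_total p q with h | h
  · calc p*q ≤ q*q := by gcongr
      _ = q^2 := (sq q).symm
      _ ≤ p^2+q^2 := le_add_self
  · calc p*q ≤ p*p := by gcongr
      _ = p^2 := (sq p).symm
      _ ≤ p^2+q^2 := le_self_add

lemma my_key (w p q : ℝ≥0∞) (hw0 : w ≠ 0) (hwt : w ≠ ∞) :
    p * q ≤ w * p^2 + w⁻¹ * q^2 := by
  have h1 : p * q = (w ^ (1/2:ℝ) * p) * ((w⁻¹) ^ (1/2:ℝ) * q) := by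
    rw [mul_mul_mul_comm, ← ENNReal.mul_rpow_of_ne_top hwt (ENNReal.inv_ne_top.2 hw0),
      ENNReal.mul_inv_cancel hw0 hwt, ENNReal.one_rpow, one_mul]
  rw [h1]
  calc (w ^ (1/2:ℝ) * p) * ((w⁻¹) ^ (1/2:ℝ) * q)
      ≤ (w ^ (1/2:ℝ) * p)^2 + ((w⁻¹) ^ (1/2:ℝ) * q)^2 := my_amgm _ _
    _ = w * p^2 + w⁻¹ * q^2 := by
        rw [mul_pow, mul_pow, my_sq_rpow_half, my_sq_rpow_half]

lemma my_lint_sq {α E : Type*} [MeasurableSpace α] [NormedAddCommGroup E]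
    {μ : Measure α} (f : α → E) :
    ∫⁻ x, ((‖f x‖₊ : ℝ≥0∞)) ^ (2:ℕ) ∂μ = (eLpNorm f 2 μ) ^ (2:ℕ) := by
  rw [eLpNorm_eq_lintegral_rpow_enorm_toReal two_ne_zero ENNReal.ofNat_ne_top]
  simp only [enorm_eq_nnnorm]
  rw [← ENNReal.rpow_natCast _ 2, ← ENNReal.rpow_mul]
  norm_num

lemma my_coe_nnnorm_tsum_le {h : ℕ → ℂ} :
    (‖∑' k, h k‖₊ : ℝ≥0∞) ≤ ∑' k, (‖h k‖₊ : ℝ≥0∞) := by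
  by_cases hs : Summable (fun k => ‖h k‖₊)
  · rw [← ENNReal.coe_tsum hs]
    exact ENNReal.coe_le_coe.2 (nnnorm_tsum_le hs)
  · have : ∑' k, (‖h k‖₊ : ℝ≥0∞) = ∞ := by
      by_contra hne
      exact hs (ENNReal.tsum_coe_ne_top_iff_summable.1 hne)
    simp [this]

theorem stmt0 {X Y : Type*} [MeasurableSpace X] [MeasurableSpace Y]
    (μ : Measure X) (ν : Measure Y) [SigmaFinite μ] [SigmaFinite ν]
    (F : ℕ → X → Y → ℂ) (f : ℕ → ℕ → X → ℂ) (g : ℕ → ℕ → Y → ℂ)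
    (hf : ∀ n k, MemLp (f n k) 2 μ) (hg : ∀ n k, MemLp (g n k) 2 ν)
    (hrep : ∀ n x y, F n x y = ∑' k, f n k x * g n k y)
    (hnorm : Tendsto (fun n => ∑' k, eLpNorm (f n k) 2 μ * eLpNorm (g n k) 2 ν)
      atTop (𝓝 0)) :
    ∃ ns : ℕ → ℕ, StrictMono ns ∧ ∃ M : Set X, ∃ N : Set Y, μ M = 0 ∧ ν N = 0 ∧
      ∀ x ∉ M, ∀ y ∉ N, Tendsto (fun j => F (ns j) x y) atTop (𝓝 0) := by
  classical
  set A : ℕ → ℕ → ℝ≥0∞ := fun n k => eLpNorm (f n k) 2 μ with hA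
  set B : ℕ → ℕ → ℝ≥0∞ := fun n k => eLpNorm (g n k) 2 ν with hB
  have hAt : ∀ n k, A n k ≠ ∞ := fun n k => (hf n k).eLpNorm_ne_top
  have hBt : ∀ n k, B n k ≠ ∞ := fun n k => (hg n k).eLpNorm_ne_top
  set w : ℕ → ℕ → ℝ≥0∞ := fun n k => B n k / A n k with hw
  set S : ℕ → ℕ → Prop := fun n k => A n k = 0 ∨ B n k = 0 with hS
  have hw0 : ∀ n k, ¬ S n k → w n k ≠ 0 := by
    intro n k hk
    simp only [hS, not_or] at hk
    simp only [hw, ne_eq, ENNReal.div_eq_zero_iff, not_or]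
    exact ⟨hk.2, hAt n k⟩
  have hwt : ∀ n k, ¬ S n k → w n k ≠ ∞ := by
    intro n k hk
    simp only [hS, not_or] at hk
    simp only [hw, ne_eq, ENNReal.div_eq_top, not_or]
    push_neg
    exact ⟨fun _ => hk.1, fun h => absurd h (hBt n k)⟩
  set u : ℕ → X → ℝ≥0∞ :=
    fun n x => ∑' k, if S n k then 0 else w n k * (‖f n k x‖₊ : ℝ≥0∞) ^ (2:ℕ) with hu
  set v : ℕ → Y → ℝ≥0∞ :=
    fun n y => ∑' k, if S n k then 0 else (w n k)⁻¹ * (‖g n k y‖₊ : ℝ≥0∞) ^ (2:ℕ) with hv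
  have humeas : ∀ n k, AEMeasurable
      (fun x => if S n k then 0 else w n k * (‖f n k x‖₊ : ℝ≥0∞) ^ (2:ℕ)) μ := by
    intro n k
    by_cases hk : S n k
    · simp only [hk, if_true]; exact aemeasurable_const
    · simp only [hk, if_false]
      exact (((hf n k).aestronglyMeasurable.enorm).pow_const 2).const_mul _
  have hvmeas : ∀ n k, AEMeasurable
      (fun y => if S n k then 0 else (w n k)⁻¹ * (‖g n k y‖₊ : ℝ≥0∞) ^ (2:ℕ)) ν := by
    intro n k
    by_cases hk : S n k
    · simp only [hk, if_true]; exact aemeasurable_const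
    · simp only [hk, if_false]
      exact (((hg n k).aestronglyMeasurable.enorm).pow_const 2).const_mul _
  -- integral bounds
  have hIu : ∀ n, ∫⁻ x, u n x ∂μ ≤ ∑' k, A n k * B n k := by
    intro n
    rw [hu, lintegral_tsum (humeas n)]
    refine ENNReal.tsum_le_tsum fun k => ?_
    by_cases hk : S n k
    · simp [hk]
    · simp only [hk, if_false]
      rw [lintegral_const_mul'' (f := fun a => (‖f n k a‖₊ : ℝ≥0∞) ^ (2:ℕ)) _ (((hf n k).aestronglyMeasurable.enorm).pow_const 2),
        my_lint_sq]
      simp only [hS, not_or] at hk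
      refine le_of_eq ?_
      calc w n k * (A n k) ^ (2:ℕ) = (B n k / A n k * A n k) * A n k := by ring
        _ = B n k * A n k := by rw [ENNReal.div_mul_cancel hk.1 (hAt n k)]
        _ = A n k * B n k := mul_comm _ _
  have hIv : ∀ n, ∫⁻ y, v n y ∂ν ≤ ∑' k, A n k * B n k := by
    intro n
    rw [hv, lintegral_tsum (hvmeas n)]
    refine ENNReal.tsum_le_tsum fun k => ?_
    by_cases hk : S n k
    · simp [hk]
    · simp only [hk, if_false]
      rw [lintegral_const_mul'' (f := fun a => (‖g n k a‖₊ : ℝ≥0∞) ^ (2:ℕ)) _ (((hg n k).aestronglyMeasurable.enorm).pow_const 2),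
        my_lint_sq]
      simp only [hS, not_or] at hk
      have hwinv : (w n k)⁻¹ = A n k / B n k :=
        ENNReal.inv_div (Or.inl (hAt n k)) (Or.inl hk.1)
      refine le_of_eq ?_
      calc (w n k)⁻¹ * (B n k) ^ (2:ℕ) = (A n k / B n k * B n k) * B n k := by
            rw [hwinv]; ring
        _ = A n k * B n k := by rw [ENNReal.div_mul_cancel hk.2 (hBt n k)]
  -- subsequence extraction
  have hex : ∀ j : ℕ, ∀ᶠ n in atTop,
      (∑' k, A n k * B n k) ≤ (2:ℝ≥0∞)⁻¹ ^ j := by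
    intro j
    refine ENNReal.tendsto_nhds_zero.1 hnorm _ ?_
    refine pos_iff_ne_zero.2 (pow_ne_zero j ?_)
    simp
  obtain ⟨ns, hmono, hns⟩ := extraction_forall_of_eventually hex
  -- geometric bound
  have hgeo : (∑' j : ℕ, (2:ℝ≥0∞)⁻¹ ^ j) ≠ ∞ := by
    rw [ENNReal.tsum_geometric]
    simp [ENNReal.one_sub_inv_two]
  have huu : AEMeasurable (fun x => ∑' j, u (ns j) x) μ :=
    AEMeasurable.ennreal_tsum fun j => AEMeasurable.ennreal_tsum (humeas (ns j))
  have hvv : AEMeasurable (fun y => ∑' j, v (ns j) y) ν :=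
    AEMeasurable.ennreal_tsum fun j => AEMeasurable.ennreal_tsum (hvmeas (ns j))
  have hUfin : ∫⁻ x, ∑' j, u (ns j) x ∂μ ≠ ∞ := by
    rw [lintegral_tsum (fun j => AEMeasurable.ennreal_tsum (humeas (ns j)))]
    exact ne_top_of_le_ne_top hgeo
      (ENNReal.tsum_le_tsum fun j => (hIu (ns j)).trans (hns j))
  have hVfin : ∫⁻ y, ∑' j, v (ns j) y ∂ν ≠ ∞ := by
    rw [lintegral_tsum (fun j => AEMeasurable.ennreal_tsum (hvmeas (ns j)))]
    exact ne_top_of_le_ne_top hgeo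
      (ENNReal.tsum_le_tsum fun j => (hIv (ns j)).trans (hns j))
  have hMae : ∀ᵐ x ∂μ, (∑' j, u (ns j) x) < ∞ := ae_lt_top' huu hUfin
  have hNae : ∀ᵐ y ∂ν, (∑' j, v (ns j) y) < ∞ := ae_lt_top' hvv hVfin
  -- bad sets from degenerate summands
  set M' : Set X := ⋃ n, ⋃ k, if A n k = 0 then {x | f n k x ≠ 0} else ∅ with hM'
  set N' : Set Y := ⋃ n, ⋃ k, if B n k = 0 then {y | g n k y ≠ 0} else ∅ with hN'
  have hM'0 : μ M' = 0 := by
    refine measure_iUnion_null fun n => measure_iUnion_null fun k => ?_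
    by_cases hk : A n k = 0
    · simp only [hk, if_true]
      have h0 : f n k =ᵐ[μ] 0 :=
        (eLpNorm_eq_zero_iff (hf n k).aestronglyMeasurable two_ne_zero).1 hk
      exact h0
    · simp [hk]
  have hN'0 : ν N' = 0 := by
    refine measure_iUnion_null fun n => measure_iUnion_null fun k => ?_
    by_cases hk : B n k = 0
    · simp only [hk, if_true]
      have h0 : g n k =ᵐ[ν] 0 :=
        (eLpNorm_eq_zero_iff (hg n k).aestronglyMeasurable two_ne_zero).1 hk
      exact h0
    · simp [hk]
  refine ⟨ns, hmono, M' ∪ {x | ¬ (∑' j, u (ns j) x) < ∞},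
    N' ∪ {y | ¬ (∑' j, v (ns j) y) < ∞},
    measure_union_null hM'0 (ae_iff.1 hMae),
    measure_union_null hN'0 (ae_iff.1 hNae), ?_⟩
  intro x hx y hy
  rw [Set.mem_union] at hx hy
  push_neg at hx hy
  obtain ⟨hx1, hx2⟩ := hx
  obtain ⟨hy1, hy2⟩ := hy
  have hx2' : (∑' j, u (ns j) x) ≠ ∞ := by
    intro h
    exact hx2 (by simp [h])
  have hy2' : (∑' j, v (ns j) y) ≠ ∞ := by
    intro h
    exact hy2 (by simp [h])
  have htU : Tendsto (fun j => u (ns j) x) atTop (𝓝 0) :=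
    ENNReal.tendsto_atTop_zero_of_tsum_ne_top hx2'
  have htV : Tendsto (fun j => v (ns j) y) atTop (𝓝 0) :=
    ENNReal.tendsto_atTop_zero_of_tsum_ne_top hy2'
  -- key pointwise bound
  have hfx : ∀ n k, A n k = 0 → f n k x = 0 := by
    intro n k hk
    by_contra hne
    exact hx1 (Set.mem_iUnion.2 ⟨n, Set.mem_iUnion.2 ⟨k, by simp [hk, hne]⟩⟩)
  have hgy : ∀ n k, B n k = 0 → g n k y = 0 := by
    intro n k hk
    by_contra hne
    exact hy1 (Set.mem_iUnion.2 ⟨n, Set.mem_iUnion.2 ⟨k, by simp [hk, hne]⟩⟩)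
  have hFb : ∀ n, (‖F n x y‖₊ : ℝ≥0∞) ≤ u n x + v n y := by
    intro n
    rw [hrep]
    calc (‖∑' k, f n k x * g n k y‖₊ : ℝ≥0∞)
        ≤ ∑' k, (‖f n k x * g n k y‖₊ : ℝ≥0∞) := my_coe_nnnorm_tsum_le
      _ ≤ ∑' k, ((if S n k then 0 else w n k * (‖f n k x‖₊ : ℝ≥0∞) ^ (2:ℕ))
            + (if S n k then 0 else (w n k)⁻¹ * (‖g n k y‖₊ : ℝ≥0∞) ^ (2:ℕ))) := by
          refine ENNReal.tsum_le_tsum fun k => ?_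
          by_cases hk : S n k
          · rcases id hk with h0 | h0
            · simp [hfx n k h0, hk, h0, hS]
            · simp [hgy n k h0, hk, h0, hS]
          · simp only [hk, if_false]
            rw [nnnorm_mul, ENNReal.coe_mul]
            exact my_key (w n k) _ _ (hw0 n k hk) (hwt n k hk)
      _ = u n x + v n y := by rw [ENNReal.tsum_add, hu, hv]
  have h0 : Tendsto (fun j => (‖F (ns j) x y‖₊ : ℝ≥0∞)) atTop (𝓝 0) := by
    have hsum : Tendsto (fun j => u (ns j) x + v (ns j) y) atTop (𝓝 0) := by
      simpa using htU.add htV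
    refine ENNReal.tendsto_nhds_zero.2 fun ε hε => ?_
    exact (ENNReal.tendsto_nhds_zero.1 hsum ε hε).mono
      (fun j hj => le_trans (hFb (ns j)) hj)
  have h2 : Tendsto (fun j => ((‖F (ns j) x y‖₊ : ℝ≥0∞)).toReal) atTop
      (𝓝 ((0:ℝ≥0∞)).toReal) := (ENNReal.tendsto_toReal (by simp)).comp h0
  rw [tendsto_zero_iff_norm_tendsto_zero]
  simpa [ENNReal.coe_toReal] using h2
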